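/- For every η > 0 there exists a constant C depending only on η such that for every three times continuously differentiable compactly supported g : ℝ³ → ℝ³ and every continuously differentiable compactly supported h : ℝ³ → ℝ³, ∫_{ℝ³} |∇²g|² |h| dx ≤ η ∫_{ℝ³} ( |∇³g|² + |∇h|² ) dx + C ∫_{ℝ³} |∇g|² ( |h|² + |∇²g|² ) dx. -/

import Mathlib

open MeasureTheory

noncomputable section

/-- Euclidean three-space. -/
abbrev E3 := EuclideanSpace ℝ (Fin 3)

/-- The j-th partial derivative of a scalar function on ℝ³. -/
def pder (j : Fin 3) (f : E3 → ℝ) : E3 → ℝ :=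
  fun x => fderiv ℝ f x (EuclideanSpace.single j 1)

/-- |∇v|², the squared Euclidean norm of the gradient of v : ℝ³ → ℝ³. -/
def grad2 (v : E3 → E3) (x : E3) : ℝ :=
  ∑ i : Fin 3, ∑ j : Fin 3, (pder j (fun y => v y i) x) ^ 2

/-- |∇²v|², the squared norm of the second derivatives of v : ℝ³ → ℝ³. -/
def hess2 (v : E3 → E3) (x : E3) : ℝ :=
  ∑ i : Fin 3, ∑ j : Fin 3, ∑ k : Fin 3, (pder k (pder j (fun y => v y i)) x) ^ 2

/-- |∇³v|², the squared norm of the third derivatives of v : ℝ³ → ℝ³. -/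
def third2 (v : E3 → E3) (x : E3) : ℝ :=
  ∑ i : Fin 3, ∑ j : Fin 3, ∑ k : Fin 3, ∑ l : Fin 3,
    (pder l (pder k (pder j (fun y => v y i))) x) ^ 2

/-! ### Auxiliary lemmas -/

lemma pder_eq (j : Fin 3) (f : E3 → ℝ) :
    pder j f = (ContinuousLinearMap.apply ℝ ℝ (EuclideanSpace.single j 1 : E3)) ∘ (fderiv ℝ f) :=
  rfl

lemma contDiff_pder {n : ℕ∞} {f : E3 → ℝ} (hf : ContDiff ℝ (n+1) f) (j : Fin 3) :
    ContDiff ℝ n (pder j f) := by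
  rw [pder_eq]
  exact (ContinuousLinearMap.apply ℝ ℝ _).contDiff.comp (hf.fderiv_right le_rfl)

lemma contDiff_pder_le {n : ℕ∞} {m : WithTop ℕ∞} {f : E3 → ℝ} (hf : ContDiff ℝ m f)
    (hnm : (n : WithTop ℕ∞) + 1 ≤ m) (j : Fin 3) : ContDiff ℝ n (pder j f) := by
  rw [pder_eq]
  exact (ContinuousLinearMap.apply ℝ ℝ _).contDiff.comp (hf.fderiv_right hnm)

lemma hcs_pder {f : E3 → ℝ} (hf : HasCompactSupport f) (j : Fin 3) :
    HasCompactSupport (pder j f) := by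
  rw [pder_eq]
  exact (hf.fderiv ℝ).comp_left rfl

lemma contDiff_comp_proj {n : WithTop ℕ∞} {g : E3 → E3} (hg : ContDiff ℝ n g) (i : Fin 3) :
    ContDiff ℝ n (fun y => g y i) :=
  (EuclideanSpace.proj (𝕜 := ℝ) (i : Fin 3)).contDiff.comp hg

lemma hcs_comp_proj {g : E3 → E3} (hg : HasCompactSupport g) (i : Fin 3) :
    HasCompactSupport (fun y => g y i) :=
  hg.comp_left (g := fun v : E3 => v i) rfl

lemma hcs_dom {f g : E3 → ℝ} (hf : HasCompactSupport f) (h : ∀ x, f x = 0 → g x = 0) :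
    HasCompactSupport g := by
  apply IsCompact.of_isClosed_subset hf isClosed_closure
  apply closure_mono
  intro x hx
  simp only [Function.mem_support] at hx ⊢
  exact fun h0 => hx (h x h0)

lemma hcs_sum {ι : Type*} (s : Finset ι) (f : ι → E3 → ℝ)
    (h : ∀ i ∈ s, HasCompactSupport (f i)) :
    HasCompactSupport (fun x => ∑ i ∈ s, f i x) := by
  classical
  induction s using Finset.induction_on with
  | empty =>
      simp only [Finset.sum_empty]
      show HasCompactSupport (0 : E3 → ℝ)
      rw [HasCompactSupport]
      simp [tsupport]
  | @insert a s' hx ih =>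
      simp only [Finset.sum_insert hx]
      exact HasCompactSupport.add (h a (Finset.mem_insert_self a s'))
        (ih (fun i hi => h i (Finset.mem_insert_of_mem hi)))

lemma integ_cc {f : E3 → ℝ} (hf : Continuous f) (hcs : HasCompactSupport f) :
    Integrable f := hf.integrable_of_hasCompactSupport hcs

lemma young {a x y : ℝ} (ha : 0 < a) : |x * y| ≤ a * x^2 + (1/(4*a)) * y^2 := by
  rw [abs_mul]
  have h1 : 0 ≤ (2*a*|x| - |y|)^2 := sq_nonneg _
  have h2 : (2*a*|x| - |y|)^2 = 4*a*(a*x^2) - 4*a*(|x| * |y|) + y^2 := by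
    linear_combination 4*a^2*(sq_abs x) + sq_abs y
  have h4a : (0:ℝ) < 4*a := by linarith
  have target : 4*a*(|x| * |y|) ≤ 4*a*(a*x^2 + (1/(4*a))*y^2) := by
    have he : 4*a*(a*x^2 + (1/(4*a))*y^2) = 4*a*(a*x^2) + y^2 := by
      field_simp
    rw [he]; linarith
  exact le_of_mul_le_mul_left target h4a

lemma integral_pder_eq_zero {F : E3 → ℝ} (hF : ContDiff ℝ 1 F) (hcs : HasCompactSupport F)
    (k : Fin 3) : ∫ x, pder k F x = 0 := by
  obtain ⟨C, hC⟩ := hF.lipschitzWith_of_hasCompactSupport hcs one_ne_zero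
  have h1 := LipschitzWith.integral_lineDeriv_mul_eq (f := fun _ : E3 => (1:ℝ))
    (g := F) (μ := volume) (LipschitzWith.const (1:ℝ)) hC hcs (EuclideanSpace.single k 1)
  have hc : ∀ x : E3, lineDeriv ℝ (fun _ : E3 => (1:ℝ)) x (EuclideanSpace.single k 1) = 0 := by
    intro x
    rw [(differentiableAt_const (1:ℝ)).lineDeriv_eq_fderiv]
    simp
  simp only [hc, zero_mul, integral_zero, mul_one] at h1
  have h2 : ∀ x : E3, lineDeriv ℝ F x (-(EuclideanSpace.single k 1 : E3)) = - pder k F x := by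
    intro x
    have hd : DifferentiableAt ℝ F x := (hF.differentiable one_ne_zero) x
    rw [hd.lineDeriv_eq_fderiv]
    simp [pder]
  simp only [h2] at h1
  rw [integral_neg] at h1
  linarith [h1]

lemma pder_mul {f g : E3 → ℝ} {x : E3} (hf : DifferentiableAt ℝ f x)
    (hg : DifferentiableAt ℝ g x) (j : Fin 3) :
    pder j (fun y => f y * g y) x = pder j f x * g x + f x * pder j g x := by
  simp only [pder, fderiv_fun_mul hf hg, ContinuousLinearMap.add_apply,
    ContinuousLinearMap.smul_apply, smul_eq_mul]
  ring

section Nlem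
variable {h : E3 → E3} {δ : ℝ}

lemma sqN_pos (hδ : 0 < δ) (x : E3) : 0 < ‖h x‖^2 + δ^2 := by positivity

lemma N_pos (hδ : 0 < δ) (x : E3) : 0 < Real.sqrt (‖h x‖^2 + δ^2) :=
  Real.sqrt_pos.mpr (sqN_pos hδ x)

lemma norm_le_N (hδ : 0 < δ) (x : E3) : ‖h x‖ ≤ Real.sqrt (‖h x‖^2 + δ^2) := by
  have := Real.sqrt_le_sqrt (show ‖h x‖^2 ≤ ‖h x‖^2 + δ^2 by nlinarith)
  rwa [Real.sqrt_sq (norm_nonneg _)] at this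

lemma N_sq (x : E3) : (Real.sqrt (‖h x‖^2 + δ^2))^2 = ‖h x‖^2 + δ^2 :=
  Real.sq_sqrt (by positivity)

lemma contDiff_N (hh : ContDiff ℝ 1 h) (hδ : 0 < δ) :
    ContDiff ℝ 1 (fun x => Real.sqrt (‖h x‖^2 + δ^2)) := by
  rw [contDiff_iff_contDiffAt]
  intro x
  exact ContDiffAt.sqrt ((hh.norm_sq ℝ).contDiffAt.add contDiffAt_const)
    (ne_of_gt (sqN_pos hδ x))

lemma pder_N_eq (hh : ContDiff ℝ 1 h) (hδ : 0 < δ) (k : Fin 3) (x : E3) :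
    pder k (fun x => Real.sqrt (‖h x‖^2 + δ^2)) x =
      (inner ℝ (h x) (fderiv ℝ h x (EuclideanSpace.single k 1)) : ℝ)
        / Real.sqrt (‖h x‖^2 + δ^2) := by
  have hdh : HasFDerivAt h (fderiv ℝ h x) x := (hh.differentiable one_ne_zero x).hasFDerivAt
  have hq : HasFDerivAt (fun y => ‖h y‖^2 + δ^2)
      (2 • ((innerSL ℝ (h x)).comp (fderiv ℝ h x))) x :=
    (hdh.norm_sq).add_const _
  have hN := hq.sqrt (ne_of_gt (sqN_pos hδ x))
  rw [pder, hN.fderiv]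
  simp only [ContinuousLinearMap.coe_smul', Pi.smul_apply, ContinuousLinearMap.coe_comp',
    Function.comp_apply, innerSL_apply_apply, smul_eq_mul]
  have := N_pos (h := h) hδ x
  field_simp
  ring

lemma pder_N_sq_le (hh : ContDiff ℝ 1 h) (hδ : 0 < δ) (k : Fin 3) (x : E3) :
    (pder k (fun x => Real.sqrt (‖h x‖^2 + δ^2)) x)^2 ≤
      ∑ i : Fin 3, (pder k (fun y => h y i) x)^2 := by
  rw [pder_N_eq hh hδ]
  have hN := N_pos (h := h) hδ x
  have hb : |(inner ℝ (h x) (fderiv ℝ h x (EuclideanSpace.single k 1)) : ℝ)| ≤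
      ‖h x‖ * ‖fderiv ℝ h x (EuclideanSpace.single k 1)‖ := abs_real_inner_le_norm _ _
  have h2 : ∑ i : Fin 3, (pder k (fun y => h y i) x)^2
      = ‖fderiv ℝ h x (EuclideanSpace.single k 1)‖^2 := by
    rw [EuclideanSpace.norm_eq]
    rw [Real.sq_sqrt (by positivity)]
    apply Finset.sum_congr rfl
    intro i _
    have : pder k (fun y => h y i) x = fderiv ℝ h x (EuclideanSpace.single k 1) i := by
      rw [pder, show (fun y => h y i) = (EuclideanSpace.proj (𝕜 := ℝ) i) ∘ h from rfl]
      rw [fderiv_comp x (EuclideanSpace.proj (𝕜 := ℝ) i).differentiableAt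
        (hh.differentiable one_ne_zero x)]
      rw [ContinuousLinearMap.fderiv]; rfl
    rw [this, Real.norm_eq_abs, sq_abs]
  rw [h2]
  rw [div_pow]
  rw [div_le_iff₀ (by positivity)]
  have hle : ‖h x‖ ≤ Real.sqrt (‖h x‖^2 + δ^2) := norm_le_N hδ x
  calc (inner ℝ (h x) (fderiv ℝ h x (EuclideanSpace.single k 1)) : ℝ)^2
      ≤ (‖h x‖ * ‖fderiv ℝ h x (EuclideanSpace.single k 1)‖)^2 := by
        rw [← sq_abs]; apply pow_le_pow_left₀ (abs_nonneg _) hb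
    _ ≤ ‖fderiv ℝ h x (EuclideanSpace.single k 1)‖^2 * (Real.sqrt (‖h x‖^2 + δ^2))^2 := by
        have h0 : (0:ℝ) ≤ ‖fderiv ℝ h x (EuclideanSpace.single k 1)‖ := norm_nonneg _
        have h1 : (0:ℝ) ≤ ‖h x‖ := norm_nonneg _
        nlinarith [mul_self_le_mul_self h1 hle,
          sq_nonneg (‖(fderiv ℝ h x) (EuclideanSpace.single k 1)‖)]
end Nlem

/-- The per-component integration-by-parts inequality. -/
lemma triple_ineq {w N : E3 → ℝ} (hw : ContDiff ℝ 2 w) (hwcs : HasCompactSupport w)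
    (hN : ContDiff ℝ 1 N) (k : Fin 3) {a : ℝ} (ha : 0 < a)
    {G : E3 → ℝ} (hG : Continuous G) (hGcs : HasCompactSupport G)
    (hGb : ∀ x, (pder k N x)^2 ≤ G x) :
    ∫ x, (pder k w x)^2 * N x ≤
      a * (∫ x, (pder k (pder k w) x)^2) + a * (∫ x, G x)
      + (1/(4*a)) * (∫ x, (w x)^2 * (N x)^2) + (1/(4*a)) * (∫ x, (w x)^2 * (pder k w x)^2) := by
  set u := pder k w with hu_def
  set u' := pder k u with hu'_def
  have hw1 : ContDiff ℝ 1 w := hw.of_le (by norm_num)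
  have hu : ContDiff ℝ 1 u := contDiff_pder (show ContDiff ℝ ((1:ℕ∞)+1) w from hw) k
  have hucs : HasCompactSupport u := hcs_pder hwcs k
  have hu'c : Continuous u' := (contDiff_pder (n := 0) hu k).continuous
  have hu'cs : HasCompactSupport u' := hcs_pder hucs k
  have hNc : Continuous N := hN.continuous
  have hpNc : Continuous (pder k N) := by
    rw [pder_eq]
    exact (ContinuousLinearMap.apply ℝ ℝ _).continuous.comp (hN.continuous_fderiv one_ne_zero)
  have hwc : Continuous w := hw.continuous
  have huc : Continuous u := hu.continuous
  have I1 : Integrable (fun x => u x^2 * N x) :=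
    integ_cc (by fun_prop) (hcs_dom hucs (fun x hx => by simp [hx]))
  have I2 : Integrable (fun x => w x * u' x * N x) :=
    integ_cc (by fun_prop) (hcs_dom hwcs (fun x hx => by simp [hx]))
  have I3 : Integrable (fun x => w x * u x * pder k N x) :=
    integ_cc (by fun_prop) (hcs_dom hwcs (fun x hx => by simp [hx]))
  have Iu' : Integrable (fun x => u' x^2) :=
    integ_cc (by fun_prop) (hcs_dom hu'cs (fun x hx => by simp [hx]))
  have IG : Integrable G := integ_cc hG hGcs
  have IwN : Integrable (fun x => (w x)^2 * (N x)^2) :=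
    integ_cc (by fun_prop) (hcs_dom hwcs (fun x hx => by simp [hx]))
  have Iwu : Integrable (fun x => (w x)^2 * (u x)^2) :=
    integ_cc (by fun_prop) (hcs_dom hwcs (fun x hx => by simp [hx]))
  have hF : ContDiff ℝ 1 (fun x => w x * (u x * N x)) := hw1.mul (hu.mul hN)
  have hFcs : HasCompactSupport (fun x => w x * (u x * N x)) :=
    hcs_dom hwcs (fun x hx => by simp [hx])
  have hid : ∀ x, pder k (fun y => w y * (u y * N y)) x =
      u x^2 * N x + w x * u' x * N x + w x * u x * pder k N x := by
    intro x
    rw [pder_mul (hw1.differentiable one_ne_zero x)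
      ((hu.differentiable one_ne_zero x).fun_mul (hN.differentiable one_ne_zero x)) k]
    rw [pder_mul (hu.differentiable one_ne_zero x) (hN.differentiable one_ne_zero x) k]
    ring
  have hzero : ∫ x, (u x^2 * N x + w x * u' x * N x + w x * u x * pder k N x) = 0 := by
    rw [← integral_congr_ae (Filter.Eventually.of_forall hid)]
    exact integral_pder_eq_zero hF hFcs k
  have I12 : Integrable (fun x => u x^2 * N x + w x * u' x * N x) volume := I1.add I2
  rw [integral_add I12 I3, integral_add I1 I2] at hzero
  have key : ∫ x, u x^2 * N x =
      -(∫ x, w x * u' x * N x) - ∫ x, w x * u x * pder k N x := by linarith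
  have B1 : -(∫ x, w x * u' x * N x) ≤
      a * (∫ x, u' x^2) + (1/(4*a)) * (∫ x, (w x)^2 * (N x)^2) := by
    have habs : -(∫ x, w x * u' x * N x) ≤ ∫ x, |w x * u' x * N x| := by
      rw [← integral_neg]
      exact integral_mono I2.neg I2.abs (fun x => neg_le_abs _)
    refine habs.trans ?_
    have hpt : ∀ x, |w x * u' x * N x| ≤ a * u' x^2 + (1/(4*a)) * ((w x)^2 * (N x)^2) := by
      intro x
      have : w x * u' x * N x = u' x * (w x * N x) := by ring
      rw [this]
      have := young (a := a) (x := u' x) (y := w x * N x) ha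
      nlinarith [this]
    calc ∫ x, |w x * u' x * N x|
        ≤ ∫ x, (a * u' x^2 + (1/(4*a)) * ((w x)^2 * (N x)^2)) := by
          exact integral_mono I2.abs ((Iu'.const_mul a).add (IwN.const_mul _)) hpt
      _ = a * (∫ x, u' x^2) + (1/(4*a)) * (∫ x, (w x)^2 * (N x)^2) := by
          rw [integral_add (Iu'.const_mul a) (IwN.const_mul _), integral_const_mul,
            integral_const_mul]
  have B2 : -(∫ x, w x * u x * pder k N x) ≤
      a * (∫ x, G x) + (1/(4*a)) * (∫ x, (w x)^2 * (u x)^2) := by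
    have habs : -(∫ x, w x * u x * pder k N x) ≤ ∫ x, |w x * u x * pder k N x| := by
      rw [← integral_neg]
      exact integral_mono I3.neg I3.abs (fun x => neg_le_abs _)
    refine habs.trans ?_
    have hpt : ∀ x, |w x * u x * pder k N x| ≤ a * G x + (1/(4*a)) * ((w x)^2 * (u x)^2) := by
      intro x
      have he : w x * u x * pder k N x = pder k N x * (w x * u x) := by ring
      rw [he]
      have hy := young (a := a) (x := pder k N x) (y := w x * u x) ha
      have hGx := hGb x
      nlinarith [hy, hGx]
    calc ∫ x, |w x * u x * pder k N x|
        ≤ ∫ x, (a * G x + (1/(4*a)) * ((w x)^2 * (u x)^2)) := by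
          exact integral_mono I3.abs ((IG.const_mul a).add (Iwu.const_mul _)) hpt
      _ = a * (∫ x, G x) + (1/(4*a)) * (∫ x, (w x)^2 * (u x)^2) := by
          rw [integral_add (IG.const_mul a) (Iwu.const_mul _), integral_const_mul,
            integral_const_mul]
  rw [key]
  linarith [B1, B2]


lemma integral_triple_sum (F : Fin 3 → Fin 3 → Fin 3 → E3 → ℝ)
    (hint : ∀ i j k, Integrable (F i j k)) :
    ∫ x, (∑ i : Fin 3, ∑ j : Fin 3, ∑ k : Fin 3, F i j k x)
      = ∑ i : Fin 3, ∑ j : Fin 3, ∑ k : Fin 3, ∫ x, F i j k x := by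
  rw [integral_finset_sum _ (fun i _ => integrable_finset_sum _
    (fun j _ => integrable_finset_sum _ (fun k _ => hint i j k)))]
  refine Finset.sum_congr rfl fun i _ => ?_
  rw [integral_finset_sum _ (fun j _ => integrable_finset_sum _ (fun k _ => hint i j k))]
  refine Finset.sum_congr rfl fun j _ => ?_
  rw [integral_finset_sum _ (fun k _ => hint i j k)]

lemma integral_double_sum (F : Fin 3 → Fin 3 → E3 → ℝ)
    (hint : ∀ i j, Integrable (F i j)) :
    ∫ x, (∑ i : Fin 3, ∑ j : Fin 3, F i j x)
      = ∑ i : Fin 3, ∑ j : Fin 3, ∫ x, F i j x := by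
  rw [integral_finset_sum _ (fun i _ => integrable_finset_sum _ (fun j _ => hint i j))]
  refine Finset.sum_congr rfl fun i _ => ?_
  rw [integral_finset_sum _ (fun j _ => hint i j)]

/-- inequality (2.14): for every η > 0 there is a constant C depending
only on η such that for every C³ compactly supported g : ℝ³ → ℝ³ and every C¹
compactly supported h : ℝ³ → ℝ³,
∫ |∇²g|² |h| ≤ η ∫ (|∇³g|² + |∇h|²) + C ∫ |∇g|² (|h|² + |∇²g|²). -/
theorem hess_sq_times_h_bound :
    ∀ η : ℝ, 0 < η → ∃ C : ℝ,
      ∀ g : E3 → E3, ContDiff ℝ 3 g → HasCompactSupport g →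
      ∀ h : E3 → E3, ContDiff ℝ 1 h → HasCompactSupport h →
        ∫ x, hess2 g x * ‖h x‖ ≤
          η * (∫ x, (third2 g x + grad2 h x))
            + C * ∫ x, grad2 g x * (‖h x‖ ^ 2 + hess2 g x) := by
  intro η hη
  refine ⟨27/(4*η), ?_⟩
  intro g hg hgcs h hh hhcs
  have hη9 : (0:ℝ) < η/9 := by linarith
  have hca : 1/(4*(η/9)) = 9/(4*η) := by field_simp
  -- components of g and h
  have hgc3 : ∀ i : Fin 3, ContDiff ℝ 3 (fun y => g y i) := fun i => contDiff_comp_proj hg i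
  have hgcs3 : ∀ i : Fin 3, HasCompactSupport (fun y => g y i) := fun i => hcs_comp_proj hgcs i
  have hhc1 : ∀ i : Fin 3, ContDiff ℝ 1 (fun y => h y i) := fun i => contDiff_comp_proj hh i
  have hhcs1 : ∀ i : Fin 3, HasCompactSupport (fun y => h y i) := fun i => hcs_comp_proj hhcs i
  have hPc2 : ∀ i j : Fin 3, ContDiff ℝ 2 (pder j (fun y => g y i)) :=
    fun i j => contDiff_pder_le (hgc3 i) (by norm_num) j
  have hPcs : ∀ i j : Fin 3, HasCompactSupport (pder j (fun y => g y i)) :=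
    fun i j => hcs_pder (hgcs3 i) j
  have hPcont : ∀ i j : Fin 3, Continuous (pder j (fun y => g y i)) :=
    fun i j => (hPc2 i j).continuous
  have hUc1 : ∀ i j k : Fin 3, ContDiff ℝ 1 (pder k (pder j (fun y => g y i))) :=
    fun i j k => contDiff_pder_le (hPc2 i j) (by norm_num) k
  have hUcs : ∀ i j k : Fin 3, HasCompactSupport (pder k (pder j (fun y => g y i))) :=
    fun i j k => hcs_pder (hPcs i j) k
  have hUcont : ∀ i j k : Fin 3, Continuous (pder k (pder j (fun y => g y i))) :=
    fun i j k => (hUc1 i j k).continuous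
  have hVcont : ∀ i j k l : Fin 3, Continuous (pder l (pder k (pder j (fun y => g y i)))) :=
    fun i j k l => (contDiff_pder_le (n := 0) (hUc1 i j k) (by norm_num) l).continuous
  have hVcs : ∀ i j k l : Fin 3, HasCompactSupport (pder l (pder k (pder j (fun y => g y i)))) :=
    fun i j k l => hcs_pder (hUcs i j k) l
  have hQcont : ∀ i k : Fin 3, Continuous (pder k (fun y => h y i)) :=
    fun i k => (contDiff_pder_le (n := 0) (hhc1 i) (by norm_num) k).continuous
  have hQcs : ∀ i k : Fin 3, HasCompactSupport (pder k (fun y => h y i)) :=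
    fun i k => hcs_pder (hhcs1 i) k
  -- scalar fields: continuity, compact support, nonnegativity
  have hessc : Continuous (hess2 g) := by
    show Continuous (fun x => ∑ i : Fin 3, ∑ j : Fin 3, ∑ k : Fin 3,
      (pder k (pder j (fun y => g y i)) x) ^ 2)
    exact continuous_finset_sum _ (fun i _ => continuous_finset_sum _
      (fun j _ => continuous_finset_sum _ (fun k _ => (hUcont i j k).pow 2)))
  have hesscs : HasCompactSupport (hess2 g) := by
    show HasCompactSupport (fun x => ∑ i : Fin 3, ∑ j : Fin 3, ∑ k : Fin 3,
      (pder k (pder j (fun y => g y i)) x) ^ 2)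
    exact hcs_sum _ _ (fun i _ => hcs_sum _ _ (fun j _ => hcs_sum _ _
      (fun k _ => hcs_dom (hUcs i j k) (fun x hx => by simp [hx]))))
  have gradgc : Continuous (grad2 g) := by
    show Continuous (fun x => ∑ i : Fin 3, ∑ j : Fin 3, (pder j (fun y => g y i) x) ^ 2)
    exact continuous_finset_sum _ (fun i _ => continuous_finset_sum _
      (fun j _ => (hPcont i j).pow 2))
  have gradgcs : HasCompactSupport (grad2 g) := by
    show HasCompactSupport (fun x => ∑ i : Fin 3, ∑ j : Fin 3, (pder j (fun y => g y i) x) ^ 2)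
    exact hcs_sum _ _ (fun i _ => hcs_sum _ _
      (fun j _ => hcs_dom (hPcs i j) (fun x hx => by simp [hx])))
  have gradhc : Continuous (grad2 h) := by
    show Continuous (fun x => ∑ i : Fin 3, ∑ j : Fin 3, (pder j (fun y => h y i) x) ^ 2)
    exact continuous_finset_sum _ (fun i _ => continuous_finset_sum _
      (fun j _ => (hQcont i j).pow 2))
  have gradhcs : HasCompactSupport (grad2 h) := by
    show HasCompactSupport (fun x => ∑ i : Fin 3, ∑ j : Fin 3, (pder j (fun y => h y i) x) ^ 2)
    exact hcs_sum _ _ (fun i _ => hcs_sum _ _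
      (fun j _ => hcs_dom (hQcs i j) (fun x hx => by simp [hx])))
  have thirdc : Continuous (third2 g) := by
    show Continuous (fun x => ∑ i : Fin 3, ∑ j : Fin 3, ∑ k : Fin 3, ∑ l : Fin 3,
      (pder l (pder k (pder j (fun y => g y i))) x) ^ 2)
    exact continuous_finset_sum _ (fun i _ => continuous_finset_sum _
      (fun j _ => continuous_finset_sum _ (fun k _ => continuous_finset_sum _
        (fun l _ => (hVcont i j k l).pow 2))))
  have thirdcs : HasCompactSupport (third2 g) := by
    show HasCompactSupport (fun x => ∑ i : Fin 3, ∑ j : Fin 3, ∑ k : Fin 3, ∑ l : Fin 3,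
      (pder l (pder k (pder j (fun y => g y i))) x) ^ 2)
    exact hcs_sum _ _ (fun i _ => hcs_sum _ _ (fun j _ => hcs_sum _ _ (fun k _ => hcs_sum _ _
      (fun l _ => hcs_dom (hVcs i j k l) (fun x hx => by simp [hx])))))
  have hess_nn : ∀ x, 0 ≤ hess2 g x := fun x => Finset.sum_nonneg (fun i _ =>
    Finset.sum_nonneg (fun j _ => Finset.sum_nonneg (fun k _ => sq_nonneg _)))
  have gradg_nn : ∀ x, 0 ≤ grad2 g x := fun x => Finset.sum_nonneg (fun i _ =>
    Finset.sum_nonneg (fun j _ => sq_nonneg _))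
  have gradh_nn : ∀ x, 0 ≤ grad2 h x := fun x => Finset.sum_nonneg (fun i _ =>
    Finset.sum_nonneg (fun j _ => sq_nonneg _))
  have third_nn : ∀ x, 0 ≤ third2 g x := fun x => Finset.sum_nonneg (fun i _ =>
    Finset.sum_nonneg (fun j _ => Finset.sum_nonneg (fun k _ =>
      Finset.sum_nonneg (fun l _ => sq_nonneg _))))
  -- integrability
  have Ithird : Integrable (third2 g) := integ_cc thirdc thirdcs
  have Igradh : Integrable (grad2 h) := integ_cc gradhc gradhcs
  have Igradg : Integrable (grad2 g) := integ_cc gradgc gradgcs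
  have Igradgh2 : Integrable (fun x => grad2 g x * ‖h x‖^2) :=
    integ_cc (gradgc.mul ((hh.continuous.norm).pow 2))
      (hcs_dom gradgcs (fun x hx => by simp [hx]))
  have Igradghess : Integrable (fun x => grad2 g x * hess2 g x) :=
    integ_cc (gradgc.mul hessc) (hcs_dom gradgcs (fun x hx => by simp [hx]))
  -- nonnegativity of integrals
  have nn1 : 0 ≤ ∫ x, third2 g x := integral_nonneg third_nn
  have nn2 : 0 ≤ ∫ x, grad2 h x := integral_nonneg gradh_nn
  have nn3 : 0 ≤ ∫ x, grad2 g x := integral_nonneg gradg_nn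
  have nn4 : 0 ≤ ∫ x, grad2 g x * hess2 g x :=
    integral_nonneg (fun x => mul_nonneg (gradg_nn x) (hess_nn x))
  -- splitting of RHS integrals
  have Esplit1 : (∫ x, (third2 g x + grad2 h x)) = (∫ x, third2 g x) + ∫ x, grad2 h x :=
    integral_add Ithird Igradh
  have Esplit2 : (∫ x, grad2 g x * (‖h x‖^2 + hess2 g x))
      = (∫ x, grad2 g x * ‖h x‖^2) + ∫ x, grad2 g x * hess2 g x := by
    rw [← integral_add Igradgh2 Igradghess]
    exact integral_congr_ae (Filter.Eventually.of_forall (fun x => by ring))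
  -- the main estimate for fixed δ
  have main : ∀ δ : ℝ, 0 < δ → (∫ x, hess2 g x * ‖h x‖) ≤
      η * ((∫ x, third2 g x) + ∫ x, grad2 h x)
      + 27/(4*η) * ((∫ x, grad2 g x * ‖h x‖^2) + ∫ x, grad2 g x * hess2 g x)
      + 27/(4*η) * δ^2 * (∫ x, grad2 g x) := by
    intro δ hδ
    have hN1 : ContDiff ℝ 1 (fun x => Real.sqrt (‖h x‖^2 + δ^2)) := contDiff_N hh hδ
    have hNc : Continuous (fun x => Real.sqrt (‖h x‖^2 + δ^2)) := hN1.continuous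
    -- step 1 : replace ‖h‖ by N
    have step1 : (∫ x, hess2 g x * ‖h x‖)
        ≤ ∫ x, hess2 g x * Real.sqrt (‖h x‖^2 + δ^2) := by
      refine integral_mono
        (integ_cc (hessc.mul hh.continuous.norm) (hcs_dom hesscs (fun x hx => by simp [hx])))
        (integ_cc (hessc.mul hNc) (hcs_dom hesscs (fun x hx => by simp [hx])))
        (fun x => mul_le_mul_of_nonneg_left (norm_le_N hδ x) (hess_nn x))
    -- step 2 : expand into a triple sum of integrals
    have IUN : ∀ i j k : Fin 3, Integrable (fun x =>
        (pder k (pder j (fun y => g y i)) x)^2 * Real.sqrt (‖h x‖^2 + δ^2)) :=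
      fun i j k => integ_cc (((hUcont i j k).pow 2).mul hNc)
        (hcs_dom (hUcs i j k) (fun x hx => by simp [hx]))
    have step2 : (∫ x, hess2 g x * Real.sqrt (‖h x‖^2 + δ^2))
        = ∑ i : Fin 3, ∑ j : Fin 3, ∑ k : Fin 3,
            ∫ x, (pder k (pder j (fun y => g y i)) x)^2 * Real.sqrt (‖h x‖^2 + δ^2) := by
      have e1 : (∫ x, hess2 g x * Real.sqrt (‖h x‖^2 + δ^2))
          = ∫ x, (∑ i : Fin 3, ∑ j : Fin 3, ∑ k : Fin 3,
              ((pder k (pder j (fun y => g y i)) x)^2 * Real.sqrt (‖h x‖^2 + δ^2))) := by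
        refine integral_congr_ae (Filter.Eventually.of_forall (fun x => ?_))
        show (∑ i : Fin 3, ∑ j : Fin 3, ∑ k : Fin 3,
            (pder k (pder j (fun y => g y i)) x) ^ 2) * Real.sqrt (‖h x‖^2 + δ^2) = _
        simp [Finset.sum_mul]
      rw [e1, integral_triple_sum _ IUN]
    -- the per-triple inequality
    have triple : ∀ i j k : Fin 3,
        (∫ x, (pder k (pder j (fun y => g y i)) x)^2 * Real.sqrt (‖h x‖^2 + δ^2)) ≤
        (η/9) * (∫ x, (pder k (pder k (pder j (fun y => g y i))) x)^2)
        + (η/9) * (∫ x, (∑ m : Fin 3, (pder k (fun y => h y m) x)^2))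
        + (1/(4*(η/9))) * (∫ x, (pder j (fun y => g y i) x)^2 *
            (Real.sqrt (‖h x‖^2 + δ^2))^2)
        + (1/(4*(η/9))) * (∫ x, (pder j (fun y => g y i) x)^2 *
            (pder k (pder j (fun y => g y i)) x)^2) := by
      intro i j k
      exact triple_ineq (hPc2 i j) (hPcs i j) hN1 k hη9
        (G := fun x => ∑ m : Fin 3, (pder k (fun y => h y m) x)^2)
        (continuous_finset_sum _ (fun m _ => (hQcont m k).pow 2))
        (hcs_sum _ _ (fun m _ => hcs_dom (hQcs m k) (fun x hx => by simp [hx])))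
        (fun x => pder_N_sq_le hh hδ k x)
    -- abbreviations for the four sums
    set TA := ∑ i : Fin 3, ∑ j : Fin 3, ∑ k : Fin 3,
      ∫ x, (pder k (pder k (pder j (fun y => g y i))) x)^2 with hTA
    set TB := ∑ i : Fin 3, ∑ j : Fin 3, ∑ k : Fin 3,
      ∫ x, (∑ m : Fin 3, (pder k (fun y => h y m) x)^2) with hTB
    set TC := ∑ i : Fin 3, ∑ j : Fin 3, ∑ k : Fin 3,
      ∫ x, (pder j (fun y => g y i) x)^2 * (Real.sqrt (‖h x‖^2 + δ^2))^2 with hTC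
    set TD := ∑ i : Fin 3, ∑ j : Fin 3, ∑ k : Fin 3,
      ∫ x, (pder j (fun y => g y i) x)^2 * (pder k (pder j (fun y => g y i)) x)^2 with hTD
    have sum_triple : (∫ x, hess2 g x * Real.sqrt (‖h x‖^2 + δ^2)) ≤
        (η/9) * TA + (η/9) * TB + (1/(4*(η/9))) * TC + (1/(4*(η/9))) * TD := by
      rw [step2, hTA, hTB, hTC, hTD]
      simp only [Finset.mul_sum]
      rw [← Finset.sum_add_distrib, ← Finset.sum_add_distrib, ← Finset.sum_add_distrib]
      refine Finset.sum_le_sum (fun i _ => ?_)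
      rw [← Finset.sum_add_distrib, ← Finset.sum_add_distrib, ← Finset.sum_add_distrib]
      refine Finset.sum_le_sum (fun j _ => ?_)
      rw [← Finset.sum_add_distrib, ← Finset.sum_add_distrib, ← Finset.sum_add_distrib]
      exact Finset.sum_le_sum (fun k _ => triple i j k)
    -- bound TA by the third-derivative integral
    have IA : ∀ i j k : Fin 3, Integrable (fun x =>
        (pder k (pder k (pder j (fun y => g y i))) x)^2) :=
      fun i j k => integ_cc ((hVcont i j k k).pow 2)
        (hcs_dom (hVcs i j k k) (fun x hx => by simp [hx]))
    have boundA : TA ≤ ∫ x, third2 g x := by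
      rw [hTA, ← integral_triple_sum _ IA]
      refine integral_mono (integrable_finset_sum _ (fun i _ => integrable_finset_sum _
        (fun j _ => integrable_finset_sum _ (fun k _ => IA i j k)))) Ithird (fun x => ?_)
      show (∑ i : Fin 3, ∑ j : Fin 3, ∑ k : Fin 3,
          (pder k (pder k (pder j (fun y => g y i))) x)^2) ≤ third2 g x
      refine Finset.sum_le_sum (fun i _ => Finset.sum_le_sum (fun j _ =>
        Finset.sum_le_sum (fun k _ => ?_)))
      exact Finset.single_le_sum (f := fun l => (pder l (pder k (pder j (fun y => g y i))) x)^2)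
        (fun l _ => sq_nonneg _) (Finset.mem_univ k)
    -- compute TB
    have IGk : ∀ k : Fin 3, Integrable (fun x => ∑ m : Fin 3, (pder k (fun y => h y m) x)^2) :=
      fun k => integrable_finset_sum _ (fun m _ => integ_cc ((hQcont m k).pow 2)
        (hcs_dom (hQcs m k) (fun x hx => by simp [hx])))
    have boundB : TB = 9 * ∫ x, grad2 h x := by
      have hbk : (∑ k : Fin 3, ∫ x, (∑ m : Fin 3, (pder k (fun y => h y m) x)^2))
          = ∫ x, grad2 h x := by
        rw [← integral_finset_sum _ (fun k _ => IGk k)]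
        refine integral_congr_ae (Filter.Eventually.of_forall (fun x => ?_))
        show (∑ k : Fin 3, ∑ m : Fin 3, (pder k (fun y => h y m) x)^2)
          = ∑ i : Fin 3, ∑ j : Fin 3, (pder j (fun y => h y i) x)^2
        exact Finset.sum_comm
      rw [hTB]
      simp only [hbk]
      simp only [Finset.sum_const, Finset.card_univ, Fintype.card_fin, nsmul_eq_mul]
      ring
    -- compute TC
    have IC : ∀ i j : Fin 3, Integrable (fun x =>
        (pder j (fun y => g y i) x)^2 * (Real.sqrt (‖h x‖^2 + δ^2))^2) :=
      fun i j => integ_cc (((hPcont i j).pow 2).mul (hNc.pow 2))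
        (hcs_dom (hPcs i j) (fun x hx => by simp [hx]))
    have boundC : TC = 3 * ((∫ x, grad2 g x * ‖h x‖^2) + δ^2 * ∫ x, grad2 g x) := by
      have hCsum : (∑ i : Fin 3, ∑ j : Fin 3,
          ∫ x, (pder j (fun y => g y i) x)^2 * (Real.sqrt (‖h x‖^2 + δ^2))^2)
          = (∫ x, grad2 g x * ‖h x‖^2) + δ^2 * ∫ x, grad2 g x := by
        rw [← integral_double_sum _ IC]
        have hpt : ∀ x, (∑ i : Fin 3, ∑ j : Fin 3,
            (pder j (fun y => g y i) x)^2 * (Real.sqrt (‖h x‖^2 + δ^2))^2)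
            = grad2 g x * ‖h x‖^2 + δ^2 * grad2 g x := by
          intro x
          have : (∑ i : Fin 3, ∑ j : Fin 3,
              (pder j (fun y => g y i) x)^2 * (Real.sqrt (‖h x‖^2 + δ^2))^2)
              = (∑ i : Fin 3, ∑ j : Fin 3, (pder j (fun y => g y i) x)^2)
                * (Real.sqrt (‖h x‖^2 + δ^2))^2 := by
            simp [Finset.sum_mul]
          rw [this, N_sq]
          show (grad2 g x) * (‖h x‖^2 + δ^2) = _
          ring
        rw [integral_congr_ae (Filter.Eventually.of_forall hpt)]
        rw [show (fun x => grad2 g x * ‖h x‖^2 + δ^2 * grad2 g x)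
          = fun x => grad2 g x * ‖h x‖^2 + δ^2 * grad2 g x from rfl]
        rw [integral_add Igradgh2 (Igradg.const_mul (δ^2)), integral_const_mul]
      rw [hTC]
      have : ∀ i j : Fin 3, (∑ k : Fin 3,
          ∫ x, (pder j (fun y => g y i) x)^2 * (Real.sqrt (‖h x‖^2 + δ^2))^2)
          = 3 * ∫ x, (pder j (fun y => g y i) x)^2 * (Real.sqrt (‖h x‖^2 + δ^2))^2 := by
        intro i j
        simp only [Finset.sum_const, Finset.card_univ, Fintype.card_fin, nsmul_eq_mul]
        norm_num
      simp only [this]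
      simp only [← Finset.mul_sum]
      rw [hCsum]
    -- bound TD
    have ID : ∀ i j k : Fin 3, Integrable (fun x =>
        (pder j (fun y => g y i) x)^2 * (pder k (pder j (fun y => g y i)) x)^2) :=
      fun i j k => integ_cc (((hPcont i j).pow 2).mul ((hUcont i j k).pow 2))
        (hcs_dom (hPcs i j) (fun x hx => by simp [hx]))
    have boundD : TD ≤ ∫ x, grad2 g x * hess2 g x := by
      rw [hTD, ← integral_triple_sum _ ID]
      refine integral_mono (integrable_finset_sum _ (fun i _ => integrable_finset_sum _
        (fun j _ => integrable_finset_sum _ (fun k _ => ID i j k)))) Igradghess (fun x => ?_)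
      show (∑ i : Fin 3, ∑ j : Fin 3, ∑ k : Fin 3,
          (pder j (fun y => g y i) x)^2 * (pder k (pder j (fun y => g y i)) x)^2)
        ≤ grad2 g x * hess2 g x
      have hwle : ∀ i j : Fin 3, (pder j (fun y => g y i) x)^2 ≤ grad2 g x := by
        intro i j
        calc (pder j (fun y => g y i) x)^2
            ≤ ∑ j' : Fin 3, (pder j' (fun y => g y i) x)^2 :=
              Finset.single_le_sum (f := fun j' => (pder j' (fun y => g y i) x)^2)
                (fun j' _ => sq_nonneg _) (Finset.mem_univ j)
          _ ≤ grad2 g x :=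
              Finset.single_le_sum
                (f := fun i' => ∑ j' : Fin 3, (pder j' (fun y => g y i') x)^2)
                (fun i' _ => Finset.sum_nonneg (fun j' _ => sq_nonneg _)) (Finset.mem_univ i)
      calc (∑ i : Fin 3, ∑ j : Fin 3, ∑ k : Fin 3,
          (pder j (fun y => g y i) x)^2 * (pder k (pder j (fun y => g y i)) x)^2)
          ≤ ∑ i : Fin 3, ∑ j : Fin 3, ∑ k : Fin 3,
            grad2 g x * (pder k (pder j (fun y => g y i)) x)^2 := by
            refine Finset.sum_le_sum (fun i _ => Finset.sum_le_sum (fun j _ =>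
              Finset.sum_le_sum (fun k _ => ?_)))
            exact mul_le_mul_of_nonneg_right (hwle i j) (sq_nonneg _)
        _ = grad2 g x * hess2 g x := by
            simp only [← Finset.mul_sum]
            rfl
    -- put everything together
    have hq9 : (0:ℝ) < 9/(4*η) := by positivity
    have e1 : (η/9) * TA ≤ η * (∫ x, third2 g x) := by
      have t1 : (η/9) * TA ≤ (η/9) * (∫ x, third2 g x) :=
        mul_le_mul_of_nonneg_left boundA (le_of_lt hη9)
      have t2 : (η/9) * (∫ x, third2 g x) ≤ η * (∫ x, third2 g x) :=
        mul_le_mul_of_nonneg_right (by linarith) nn1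
      linarith
    have e2 : (1/(4*(η/9))) * TD ≤ 27/(4*η) * (∫ x, grad2 g x * hess2 g x) := by
      rw [hca]
      have t1 : (9/(4*η)) * TD ≤ (9/(4*η)) * (∫ x, grad2 g x * hess2 g x) :=
        mul_le_mul_of_nonneg_left boundD (le_of_lt hq9)
      have t2 : (9/(4*η)) * (∫ x, grad2 g x * hess2 g x)
          ≤ (27/(4*η)) * (∫ x, grad2 g x * hess2 g x) := by
        refine mul_le_mul_of_nonneg_right ?_ nn4
        have h4η : (0:ℝ) < 4*η := by linarith
        rw [div_le_div_iff₀ h4η h4η]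
        nlinarith
      linarith
    have e3 : (η/9) * TB = η * (∫ x, grad2 h x) := by
      rw [boundB]; ring
    have e4 : (1/(4*(η/9))) * TC
        = 27/(4*η) * (∫ x, grad2 g x * ‖h x‖^2) + 27/(4*η) * δ^2 * (∫ x, grad2 g x) := by
      rw [hca, boundC]; field_simp; ring
    calc (∫ x, hess2 g x * ‖h x‖)
        ≤ ∫ x, hess2 g x * Real.sqrt (‖h x‖^2 + δ^2) := step1
      _ ≤ (η/9) * TA + (η/9) * TB + (1/(4*(η/9))) * TC + (1/(4*(η/9))) * TD := sum_triple
      _ ≤ η * ((∫ x, third2 g x) + ∫ x, grad2 h x)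
          + 27/(4*η) * ((∫ x, grad2 g x * ‖h x‖^2) + ∫ x, grad2 g x * hess2 g x)
          + 27/(4*η) * δ^2 * (∫ x, grad2 g x) := by
          linarith [e1, e2, e3, e4]
  -- let δ → 0
  rw [Esplit1, Esplit2]
  have hK : 0 ≤ 27/(4*η) * (∫ x, grad2 g x) := by positivity
  refine le_of_forall_pos_le_add (fun ε hε => ?_)
  set K := 27/(4*η) * (∫ x, grad2 g x) with hK_def
  have hδpos : 0 < Real.sqrt (ε / (K+1)) := Real.sqrt_pos.mpr (by positivity)
  have hδsq : (Real.sqrt (ε / (K+1)))^2 = ε / (K+1) := Real.sq_sqrt (by positivity)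
  have hmain := main (Real.sqrt (ε / (K+1))) hδpos
  have hKd : 27/(4*η) * (Real.sqrt (ε / (K+1)))^2 * (∫ x, grad2 g x) ≤ ε := by
    rw [hδsq]
    have : 27/(4*η) * (ε / (K+1)) * (∫ x, grad2 g x) = K * (ε / (K+1)) := by
      rw [hK_def]; ring
    rw [this]
    rw [div_eq_mul_inv, ← mul_assoc]
    have h1 : K * ε ≤ (K+1) * ε := by nlinarith
    have h2 : 0 < K + 1 := by linarith
    calc K * ε * (K+1)⁻¹ ≤ (K+1) * ε * (K+1)⁻¹ := by
          exact mul_le_mul_of_nonneg_right h1 (by positivity)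
      _ = ε := by field_simp
  linarith [hmain, hKd]
end
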